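/- Let g = g_{5,3,3(λ)}. For every F ∈ g*, the skew-symmetric bilinear form B_F has rank either 0 or 2; equivalently, the subspace {X ∈ g : F([X, Y]) = 0 for all Y ∈ g} has dimension 5 or 3. (This is the infinitesimal MD-condition: every coadjoint orbit of the corresponding connected simply connected Lie group G_{5,3,3(λ)} has dimension 0 or 2, so it is an MD5-group.) -/

import Mathlib

open scoped Matrix

/-- The Lie bracket of g_{5,3,3(λ)}: [X1,X2] = X3, [X2,X3] = λ·X3, [X2,X4] = X4, [X2,X5] = X5,
written in coordinates with respect to the basis (X₁, X₂, X₃, X₄, X₅) (all other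
brackets of basis vectors vanish); it is the bilinear extension of the structure
constants above. -/
def bracketg533 (l : ℝ) (U V : Fin 5 → ℝ) : Fin 5 → ℝ :=
  ![0, 0,
    (U 0 * V 1 - U 1 * V 0) + l * (U 1 * V 2 - U 2 * V 1),
    U 1 * V 3 - U 3 * V 1,
    U 1 * V 4 - U 4 * V 1]

/-- The matrix (in the basis (X₁, ..., X₅)) of the skew-symmetric bilinear form
B_F(X, Y) = F([X, Y]); the functional F is identified with its coordinate vector with
respect to the dual basis, acting by the dot product. -/
def BFg533 (l : ℝ) (F : Fin 5 → ℝ) : Matrix (Fin 5) (Fin 5) ℝ :=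
  Matrix.of fun i j => F ⬝ᵥ bracketg533 l (Pi.single i 1) (Pi.single j 1)

/-- The radical {X ∈ g | F([X, Y]) = 0 for all Y ∈ g} of the form B_F, as a subspace. -/
def radg533 (l : ℝ) (F : Fin 5 → ℝ) : Submodule ℝ (Fin 5 → ℝ) where
  carrier := {X | ∀ Y : Fin 5 → ℝ, F ⬝ᵥ bracketg533 l X Y = 0}
  zero_mem' := by
    intro Y
    simp [bracketg533, dotProduct, Fin.sum_univ_five]
  add_mem' := by
    intro a b ha hb Y
    have h1 := ha Y
    have h2 := hb Y
    simp only [bracketg533, dotProduct, Fin.sum_univ_five, Matrix.cons_val_zero,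
      Matrix.cons_val_one, Matrix.head_cons, Matrix.cons_val_two, Matrix.tail_cons,
      Matrix.cons_val_three, Matrix.cons_val_four, Pi.add_apply] at h1 h2 ⊢
    linear_combination h1 + h2
  smul_mem' := by
    intro c a ha Y
    have h1 := ha Y
    simp only [bracketg533, dotProduct, Fin.sum_univ_five, Matrix.cons_val_zero,
      Matrix.cons_val_one, Matrix.head_cons, Matrix.cons_val_two, Matrix.tail_cons,
      Matrix.cons_val_three, Matrix.cons_val_four, Pi.smul_apply, smul_eq_mul] at h1 ⊢
    linear_combination c * h1

lemma bracket_eq (l : ℝ) (F X Y : Fin 5 → ℝ) :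
    F ⬝ᵥ bracketg533 l X Y =
      Y 1 * (F 2 * X 0 - l * F 2 * X 2 - F 3 * X 3 - F 4 * X 4) -
      X 1 * (F 2 * Y 0 - l * F 2 * Y 2 - F 3 * Y 3 - F 4 * Y 4) := by
  simp [bracketg533, dotProduct, Fin.sum_univ_five]
  ring

lemma BF_explicit (l : ℝ) (F : Fin 5 → ℝ) :
    BFg533 l F = !![0, F 2, 0, 0, 0;
                    -F 2, 0, l * F 2, F 3, F 4;
                    0, -(l * F 2), 0, 0, 0;
                    0, -F 3, 0, 0, 0;
                    0, -F 4, 0, 0, 0] := by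
  ext i j
  fin_cases i <;> fin_cases j <;>
    simp [BFg533, bracket_eq, Pi.single_apply, Matrix.vecHead, Matrix.vecTail]

lemma mem_radg533 (l : ℝ) (F X : Fin 5 → ℝ) :
    X ∈ radg533 l F ↔ ∀ Y : Fin 5 → ℝ, F ⬝ᵥ bracketg533 l X Y = 0 := Iff.rfl

/-- the defining constraints of the radical as a 2×5 matrix -/
def Ng533 (l : ℝ) (F : Fin 5 → ℝ) : Matrix (Fin 2) (Fin 5) ℝ :=
  !![0, 1, 0, 0, 0; F 2, 0, -(l * F 2), -(F 3), -(F 4)]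

lemma rad_eq_ker (l : ℝ) (F : Fin 5 → ℝ) (h : ¬ (F 2 = 0 ∧ F 3 = 0 ∧ F 4 = 0)) :
    radg533 l F = LinearMap.ker (Ng533 l F).mulVecLin := by
  ext X
  rw [mem_radg533, LinearMap.mem_ker]
  constructor
  · intro hX
    have h0 := hX ![1, 0, 0, 0, 0]
    have h1 := hX ![0, 1, 0, 0, 0]
    have h3 := hX ![0, 0, 0, 1, 0]
    have h4 := hX ![0, 0, 0, 0, 1]
    rw [bracket_eq] at h0 h1 h3 h4
    simp only [Matrix.cons_val_zero, Matrix.cons_val_one, Matrix.head_cons, Matrix.cons_val_two,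
      Matrix.tail_cons, Matrix.cons_val_three, Matrix.cons_val_four] at h0 h1 h3 h4
    have hx1 : X 1 = 0 := by
      rcases not_and_or.mp h with h2 | h'
      · exact (mul_eq_zero.mp (by linarith : X 1 * F 2 = 0)).resolve_right h2
      rcases not_and_or.mp h' with h3' | h4'
      · exact (mul_eq_zero.mp (by linarith : X 1 * F 3 = 0)).resolve_right h3'
      · exact (mul_eq_zero.mp (by linarith : X 1 * F 4 = 0)).resolve_right h4'
    show Ng533 l F *ᵥ X = 0
    funext j
    fin_cases j <;>
      simp [Ng533, Matrix.mulVec, dotProduct, Fin.sum_univ_five, hx1] <;> linarith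
  · intro hX Y
    have hX' : Ng533 l F *ᵥ X = 0 := hX
    have h0 := congrFun hX' 0
    have h1 := congrFun hX' 1
    simp only [Ng533, Matrix.mulVec, dotProduct, Fin.sum_univ_five,
      Matrix.cons_val', Matrix.cons_val_zero, Matrix.cons_val_one, Matrix.head_cons,
      Matrix.empty_val', Matrix.cons_val_fin_one, Matrix.head_fin_const,
      Matrix.cons_val_two, Matrix.tail_cons, Matrix.cons_val_three, Matrix.cons_val_four,
      Matrix.of_apply, Pi.zero_apply] at h0 h1
    rw [bracket_eq]
    have hx1 : X 1 = 0 := by linarith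
    have hg : F 2 * X 0 - l * F 2 * X 2 - F 3 * X 3 - F 4 * X 4 = 0 := by linarith
    rw [hx1, hg]
    ring

lemma N_surjective (l : ℝ) (F : Fin 5 → ℝ) (h : ¬ (F 2 = 0 ∧ F 3 = 0 ∧ F 4 = 0)) :
    Function.Surjective (Ng533 l F).mulVecLin := by
  intro z
  have key : ∃ X : Fin 5 → ℝ, X 1 = z 0 ∧
      F 2 * X 0 - l * F 2 * X 2 - F 3 * X 3 - F 4 * X 4 = z 1 := by
    rcases not_and_or.mp h with h2 | h'
    · exact ⟨![z 1 / F 2, z 0, 0, 0, 0], by simp, by simp; field_simp⟩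
    rcases not_and_or.mp h' with h3 | h4
    · exact ⟨![0, z 0, 0, -(z 1) / F 3, 0], by simp, by simp; field_simp⟩
    · exact ⟨![0, z 0, 0, 0, -(z 1) / F 4], by simp, by simp; field_simp⟩
  obtain ⟨X, hX1, hXg⟩ := key
  refine ⟨X, ?_⟩
  show Ng533 l F *ᵥ X = z
  funext j
  fin_cases j <;>
    simp [Ng533, Matrix.mulVec, dotProduct, Fin.sum_univ_five, hX1] <;> linarith

/-- For every functional F, the skew-symmetric form B_F has rank 0 or 2; equivalently,
its radical {X | F([X, Y]) = 0 for all Y} has dimension 5 or 3 (the infinitesimal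
MD-condition: every coadjoint orbit has dimension 0 or 2). -/
theorem md_condition_g533 (l : ℝ) (hl1 : l ≠ 1) (F : Fin 5 → ℝ) :
    ((BFg533 l F).rank = 0 ∨ (BFg533 l F).rank = 2) ∧
    (Module.finrank ℝ (radg533 l F) = 5 ∨ Module.finrank ℝ (radg533 l F) = 3) := by
  by_cases h : F 2 = 0 ∧ F 3 = 0 ∧ F 4 = 0
  · obtain ⟨h2, h3, h4⟩ := h
    constructor
    · left
      have hM : BFg533 l F = 0 := by
        rw [BF_explicit]
        ext i j
        fin_cases i <;> fin_cases j <;>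
          simp [h2, h3, h4, Matrix.vecHead, Matrix.vecTail]
      rw [hM, Matrix.rank_zero]
    · left
      have hrad : radg533 l F = ⊤ := by
        ext X
        simp only [Submodule.mem_top, iff_true, mem_radg533]
        intro Y
        rw [bracket_eq, h2, h3, h4]
        ring
      rw [hrad, finrank_top]
      simp
  · have hker : Module.finrank ℝ (radg533 l F) = 3 := by
      rw [rad_eq_ker l F h]
      have hrn := LinearMap.finrank_range_add_finrank_ker (Ng533 l F).mulVecLin
      have hrange : LinearMap.range (Ng533 l F).mulVecLin = ⊤ :=
        LinearMap.range_eq_top.mpr (N_surjective l F h)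
      rw [hrange, finrank_top] at hrn
      simp only [Module.finrank_fin_fun] at hrn
      omega
    refine ⟨Or.inr ?_, Or.inr hker⟩
    have hked : LinearMap.ker (BFg533 l F)ᵀ.mulVecLin = radg533 l F := by
      ext X
      rw [LinearMap.mem_ker, mem_radg533]
      constructor
      · intro hX Y
        have hX' : (BFg533 l F)ᵀ *ᵥ X = 0 := hX
        have hj : ∀ j, ((BFg533 l F)ᵀ *ᵥ X) j = 0 := fun j => congrFun hX' j
        have h0 := hj 0
        have h1 := hj 1
        have h2 := hj 2
        have h3 := hj 3
        have h4 := hj 4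
        simp only [BF_explicit, Matrix.transpose_apply, Matrix.mulVec, dotProduct,
          Fin.sum_univ_five, Matrix.cons_val', Matrix.cons_val_zero, Matrix.cons_val_one,
          Matrix.head_cons, Matrix.empty_val', Matrix.cons_val_fin_one,
          Matrix.cons_val_two, Matrix.tail_cons, Matrix.cons_val_three, Matrix.cons_val_four,
          Matrix.of_apply, Matrix.head_fin_const] at h0 h1 h2 h3 h4
        rw [bracket_eq]
        linear_combination Y 1 * h1 + Y 0 * h0 + Y 2 * h2 + Y 3 * h3 + Y 4 * h4
      · intro hX
        have h0 := hX ![1, 0, 0, 0, 0]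
        have h1 := hX ![0, 1, 0, 0, 0]
        have h2 := hX ![0, 0, 1, 0, 0]
        have h3 := hX ![0, 0, 0, 1, 0]
        have h4 := hX ![0, 0, 0, 0, 1]
        rw [bracket_eq] at h0 h1 h2 h3 h4
        simp only [Matrix.cons_val_zero, Matrix.cons_val_one, Matrix.head_cons,
          Matrix.cons_val_two, Matrix.tail_cons, Matrix.cons_val_three,
          Matrix.cons_val_four] at h0 h1 h2 h3 h4
        show (BFg533 l F)ᵀ *ᵥ X = 0
        rw [Matrix.mulVec_transpose]
        funext j
        fin_cases j <;>
          simp [BF_explicit, Matrix.vecMul, dotProduct, Fin.sum_univ_five,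
            Matrix.vecHead, Matrix.vecTail, -mul_eq_zero, -neg_eq_zero] <;> linarith
    have hrn := LinearMap.finrank_range_add_finrank_ker (BFg533 l F)ᵀ.mulVecLin
    rw [hked, hker] at hrn
    simp only [Module.finrank_fin_fun] at hrn
    have hrt : (BFg533 l F)ᵀ.rank = 2 := by
      rw [show (BFg533 l F)ᵀ.rank
          = Module.finrank ℝ (LinearMap.range (BFg533 l F)ᵀ.mulVecLin) from rfl]
      omega
    rw [← Matrix.rank_transpose]
    exact hrt
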